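/- arXiv:2209.02041 — 2 statements merged into one kernel-verified Lean document; each statement's English description precedes it below -/
import Mathlib

section
/- Let (X,r) be a solution and k a positive integer. The diagonal map of the k-cabled solution (X, r^{(k)}) is T^k; that is, for every x ∈ X one has (τ^{(k)}_x)⁻¹(x) = T^k(x), and r^{(k)}(T^k(x), x) = (T^k(x), x). -/
open Function

variable {X : Type*}

/-- The map `r(x,y) = (σ_x(y), τ_y(x))` built from two families of bijections. -/
def ybR (σ τ : X → Equiv.Perm X) : X × X → X × X :=
  fun p => (σ p.1 p.2, τ p.2 p.1)

/-- Apply a map `X × X → X × X` to the first two coordinates of a triple (`r × id`). -/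
def lmap (r : X × X → X × X) : X × X × X → X × X × X :=
  fun p => ((r (p.1, p.2.1)).1, ((r (p.1, p.2.1)).2, p.2.2))

/-- Apply a map `X × X → X × X` to the last two coordinates of a triple (`id × r`). -/
def rmap (r : X × X → X × X) : X × X × X → X × X × X :=
  fun p => (p.1, r p.2)

/-- A finite non-degenerate involutive set-theoretic solution of the Yang--Baxter
equation on a finite set `X` with `|X| > 1`. -/
structure YBSolution (X : Type*) [Fintype X] where
  σ : X → Equiv.Perm X
  τ : X → Equiv.Perm X
  card_gt_one : 1 < Fintype.card X
  involutive : ∀ p : X × X, ybR σ τ (ybR σ τ p) = p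
  braid : lmap (ybR σ τ) ∘ rmap (ybR σ τ) ∘ lmap (ybR σ τ)
        = rmap (ybR σ τ) ∘ lmap (ybR σ τ) ∘ rmap (ybR σ τ)

namespace YBSolution

variable [Fintype X]

/-- The diagonal map `T(x) = τ_x⁻¹(x)`. -/
def T (S : YBSolution X) (x : X) : X := (S.τ x).symm x

/-- The map `U(x) = σ_x⁻¹(x)`, the inverse of the diagonal map. -/
def U (S : YBSolution X) (x : X) : X := (S.σ x).symm x

/-- The `k`-cabled sigma maps (also denoted `π_k`):
`σ^{(k)}_x = σ_x ∘ σ_{U(x)} ∘ ⋯ ∘ σ_{U^{k-1}(x)}`. -/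
def sigmaCab (S : YBSolution X) : ℕ → X → X → X
  | 0, _ => id
  | k + 1, x => ⇑(S.σ x) ∘ S.sigmaCab k (S.U x)

/-- The composition `τ_{U^{k-1}(y)} ∘ ⋯ ∘ τ_{U(y)} ∘ τ_y`. -/
def tauChain (S : YBSolution X) : ℕ → X → X → X
  | 0, _ => id
  | k + 1, y => S.tauChain k (S.U y) ∘ ⇑(S.τ y)

/-- The `k`-cabled tau maps:
`τ^{(k)}_y = T^{k-1} ∘ τ_{U^{k-1}(y)} ∘ ⋯ ∘ τ_{U(y)} ∘ τ_y ∘ T^{-(k-1)}`,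
where `T^{-(k-1)} = U^{k-1}` since `U` is the inverse of `T`. -/
def tauCab (S : YBSolution X) (k : ℕ) (y : X) : X → X :=
  S.T^[k - 1] ∘ S.tauChain k y ∘ S.U^[k - 1]

/-- The `k`-cabled solution `r^{(k)}(x,y) = (σ^{(k)}_x(y), τ^{(k)}_y(x))`. -/
def rCab (S : YBSolution X) (k : ℕ) : X × X → X × X :=
  fun p => (S.sigmaCab k p.1 p.2, S.tauCab k p.2 p.1)

/-- The permutation group `𝒢(X,r)`, generated by the `σ_x`. -/
def G (S : YBSolution X) : Subgroup (Equiv.Perm X) :=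
  Subgroup.closure (Set.range S.σ)

/-- The permutation group `𝒢(X,r^{(k)})` of the `k`-cabled solution,
generated by the `σ^{(k)}_x`. -/
def Gcab (S : YBSolution X) (k : ℕ) : Subgroup (Equiv.Perm X) :=
  Subgroup.closure {g : Equiv.Perm X | ∃ x : X, ⇑g = S.sigmaCab k x}

/-- The orbit of `x` under the diagonal map `T`. -/
def Torbit (S : YBSolution X) (x : X) : Set X := {y | ∃ n : ℕ, S.T^[n] x = y}

/-- The orbit of `x` under `𝒢(X,r)`. -/
def Gorbit (S : YBSolution X) (x : X) : Set X := {y | ∃ g ∈ S.G, g x = y}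

/-- The orbit of `x` under `𝒢(X,r^{(k)})`. -/
def GcabOrbit (S : YBSolution X) (k : ℕ) (x : X) : Set X :=
  {y | ∃ g ∈ S.Gcab k, g x = y}

/-- A solution is indecomposable when `𝒢(X,r)` acts transitively on `X`. -/
def IsIndecomposable (S : YBSolution X) : Prop := ∀ x y : X, ∃ g ∈ S.G, g x = y

end YBSolution

namespace YBSolution

variable [Fintype X] (S : YBSolution X)

lemma sig_U (x : X) : S.σ x (S.U x) = x := Equiv.apply_symm_apply _ _

lemma tau_T (x : X) : S.τ x (S.T x) = x := Equiv.apply_symm_apply _ _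

lemma tau_U (x : X) : S.τ (S.U x) x = S.U x := by
  have h := S.involutive (x, S.U x)
  simp only [ybR, sig_U] at h
  have h1 : S.σ x (S.τ (S.U x) x) = x := congrArg Prod.fst h
  have h2 := congrArg Prod.snd h
  simpa using (S.σ x).injective (by rw [h1, sig_U])

lemma T_U (x : X) : S.T (S.U x) = x := by
  have := S.tau_U x
  unfold T
  exact (Equiv.symm_apply_eq _).mpr this.symm

lemma sig_T (x : X) : S.σ (S.T x) x = S.T x := by
  have h := S.involutive (S.T x, x)
  simp only [ybR, tau_T] at h
  have h2 : S.τ x (S.σ (S.T x) x) = x := congrArg Prod.snd h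
  have : S.σ (S.T x) x = (S.τ x).symm x := (Equiv.eq_symm_apply _).mpr h2
  simpa [T] using this

lemma U_T (x : X) : S.U (S.T x) = x := by
  have := S.sig_T x
  unfold U
  exact (Equiv.symm_apply_eq _).mpr this.symm

lemma sigmaCab_fix : ∀ k (x : X), S.sigmaCab k (S.T^[k] x) x = S.T^[k] x := by
  intro k
  induction k with
  | zero => intro x; simp [sigmaCab]
  | succ k ih =>
    intro x
    rw [Function.iterate_succ_apply']
    simp only [sigmaCab, Function.comp_apply, U_T, ih, sig_T]

lemma tauChain_fix : ∀ m (y : X), S.tauChain m (S.U y) y = S.U^[m] y := by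
  intro m
  induction m with
  | zero => intro y; simp [tauChain]
  | succ m ih =>
    intro y
    simp only [tauChain, Function.comp_apply, tau_U, ih, Function.iterate_succ_apply]

lemma U_iter_T_iter (m : ℕ) (x : X) : S.U^[m] (S.T^[m] x) = x :=
  (Function.LeftInverse.iterate S.U_T m) x

lemma T_iter_U_iter (m : ℕ) (x : X) : S.T^[m] (S.U^[m] x) = x :=
  (Function.LeftInverse.iterate S.T_U m) x

end YBSolution

/-- the diagonal map of the `k`-cabled solution is `T^k`:
`(τ^{(k)}_x)⁻¹(x) = T^k(x)` and `r^{(k)}(T^k(x), x) = (T^k(x), x)`. -/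
theorem cabled_diagonal_map [Fintype X] (S : YBSolution X) (k : ℕ) (hk : 0 < k) (x : X) :
    S.tauCab k x (S.T^[k] x) = x ∧ S.rCab k (S.T^[k] x, x) = (S.T^[k] x, x) := by
  obtain ⟨m, rfl⟩ : ∃ m, k = m + 1 := ⟨k - 1, (Nat.succ_pred_eq_of_pos hk).symm⟩
  have htau : S.tauCab (m + 1) x (S.T^[m + 1] x) = x := by
    unfold YBSolution.tauCab
    simp only [Nat.add_sub_cancel, Function.comp_apply]
    have h1 : S.U^[m] (S.T^[m + 1] x) = S.T x := by
      rw [Function.iterate_succ_apply, S.U_iter_T_iter]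
    rw [h1]
    have h2 : S.tauChain (m + 1) x (S.T x) = S.U^[m] x := by
      simp only [YBSolution.tauChain, Function.comp_apply, S.tau_T, S.tauChain_fix]
    rw [h2, S.T_iter_U_iter]
  refine ⟨htau, ?_⟩
  simp only [YBSolution.rCab, S.sigmaCab_fix, htau]
end

section
/- Let (X,r) be a solution with Dehornoy class m. Then the order of the diagonal map T in the symmetric group of X divides m; in particular T^m = Id. -/
open Function

variable {X : Type*}

section Aux

variable [Fintype X]

lemma aux_T_U (S : YBSolution X) (x : X) : S.T (S.U x) = x := by
  have h := congrArg Prod.fst (S.involutive (x, S.U x))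
  simp only [ybR, YBSolution.U, Equiv.apply_symm_apply] at h
  -- h : σ x (τ (U x) x) = x
  have h2 : (S.τ (S.U x)) x = S.U x := by
    have := congrArg (S.σ x).symm h
    simpa [YBSolution.U] using this
  show (S.τ (S.U x)).symm (S.U x) = x
  rw [Equiv.symm_apply_eq]
  exact h2.symm

lemma aux_Tk_Uk (S : YBSolution X) (k : ℕ) (x : X) :
    S.T^[k] (S.U^[k] x) = x := by
  induction k generalizing x with
  | zero => simp
  | succ k ih =>
    rw [Function.iterate_succ_apply, Function.iterate_succ_apply']
    rw [aux_T_U, ih]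

lemma aux_sigmaCab_Uk (S : YBSolution X) (k : ℕ) (x : X) :
    S.sigmaCab k x (S.U^[k] x) = x := by
  induction k generalizing x with
  | zero => simp [YBSolution.sigmaCab]
  | succ k ih =>
    rw [Function.iterate_succ_apply]
    show (S.σ x) (S.sigmaCab k (S.U x) (S.U^[k] (S.U x))) = x
    rw [ih (S.U x)]
    simp [YBSolution.U]

end Aux

/-- the order of the diagonal map `T` divides the Dehornoy class
`m`; in particular `T^m = Id`. -/
theorem order_T_dvd_dehornoy_class [Fintype X] (S : YBSolution X) (m : ℕ)
    (hm : IsLeast {m : ℕ | 0 < m ∧ ∀ x : X, S.sigmaCab m x = id} m) :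
    S.T^[m] = id ∧ ∀ n : ℕ, IsLeast {n : ℕ | 0 < n ∧ S.T^[n] = id} n → n ∣ m := by
  obtain ⟨⟨hmpos, hsig⟩, _⟩ := hm
  have hTm : S.T^[m] = id := by
    funext x
    have hU : S.U^[m] x = x := by
      have := aux_sigmaCab_Uk S m x
      rwa [hsig x] at this
    calc S.T^[m] x = S.T^[m] (S.U^[m] x) := by rw [hU]
    _ = x := aux_Tk_Uk S m x
  refine ⟨hTm, fun n hn => ?_⟩
  obtain ⟨⟨hnpos, hTn⟩, hnle⟩ := hn
  have hr : S.T^[m % n] = id := by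
    funext x
    have : S.T^[m] x = S.T^[m % n] x := by
      conv_lhs => rw [← Nat.div_add_mod m n]
      rw [Nat.add_comm, Function.iterate_add_apply,
        Function.iterate_mul, hTn]
      simp
    rw [hTm] at this
    exact this.symm
  rcases Nat.eq_zero_or_pos (m % n) with h0 | hpos
  · exact Nat.dvd_of_mod_eq_zero h0
  · have := hnle ⟨hpos, hr⟩
    have := Nat.mod_lt m hnpos
    omega
end
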